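/- Let F be an algebraically closed field and D a positive integer. For any choice of polynomials g_1, ..., g_n in F[x_1,...,x_n], each of degree at most D-1, the affine variety V(x_1^D - g_1, x_2^D - g_2, ..., x_n^D - g_n) in F^n has dimension zero (equivalently, it is a finite nonempty set). -/

import Mathlib

open MvPolynomial

namespace Stmt0Aux

variable {F : Type*} [Field F] {n D : ℕ}

/-- `p` is a monic monomial of multidegree `β` plus terms of lower total degree. -/
def Good (β : Fin n →₀ ℕ) (p : MvPolynomial (Fin n) F) : Prop :=
  ∃ q : MvPolynomial (Fin n) F, p = monomial β 1 + q ∧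
    (q = 0 ∨ q.totalDegree < β.sum fun _ e => e)

lemma add_aux {a b : MvPolynomial (Fin n) F} {s : ℕ} (ha : a = 0 ∨ a.totalDegree < s)
    (hb : b = 0 ∨ b.totalDegree < s) : a + b = 0 ∨ (a + b).totalDegree < s := by
  rcases ha with rfl | ha
  · simpa using hb
  rcases hb with rfl | hb
  · right; simpa using ha
  · right; exact lt_of_le_of_lt (totalDegree_add a b) (max_lt ha hb)

lemma mul_aux {p q : MvPolynomial (Fin n) F} {s t : ℕ} (hp : p.totalDegree ≤ s)
    (hq : q = 0 ∨ q.totalDegree < t) : p * q = 0 ∨ (p * q).totalDegree < s + t := by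
  rcases hq with rfl | hq
  · left; simp
  · right
    calc (p * q).totalDegree ≤ p.totalDegree + q.totalDegree := totalDegree_mul p q
    _ < s + t := by omega

lemma sum_add_deg (β γ : Fin n →₀ ℕ) :
    ((β + γ).sum fun _ e => e) = (β.sum fun _ e => e) + γ.sum fun _ e => e :=
  Finsupp.sum_add_index' (fun _ => rfl) (fun _ _ _ => rfl)

lemma Good.mul {β γ : Fin n →₀ ℕ} {p p' : MvPolynomial (Fin n) F}
    (h : Good β p) (h' : Good γ p') : Good (β + γ) (p * p') := by
  obtain ⟨q, rfl, hq⟩ := h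
  obtain ⟨q', rfl, hq'⟩ := h'
  have hmm : (monomial β (1 : F)) * monomial γ 1 = monomial (β + γ) 1 := by
    rw [monomial_mul, one_mul]
  refine ⟨monomial β 1 * q' + (q * monomial γ 1 + q * q'), by rw [← hmm]; ring, ?_⟩
  rw [sum_add_deg]
  apply add_aux
  · exact mul_aux (totalDegree_monomial β (one_ne_zero (α := F))).le hq'
  apply add_aux
  · rcases hq with rfl | hq
    · left; simp
    · right
      calc (q * monomial γ 1).totalDegree ≤ q.totalDegree + (monomial γ (1:F)).totalDegree :=
        totalDegree_mul _ _
      _ = q.totalDegree + γ.sum fun _ e => e := by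
          rw [totalDegree_monomial γ (one_ne_zero (α := F))]
      _ < (β.sum fun _ e => e) + γ.sum fun _ e => e := by omega
  · rcases hq with rfl | hq
    · left; simp
    · exact mul_aux hq.le hq'

lemma Good.one : Good (0 : Fin n →₀ ℕ) (1 : MvPolynomial (Fin n) F) :=
  ⟨0, by simp, Or.inl rfl⟩

lemma Good.pow {β : Fin n →₀ ℕ} {p : MvPolynomial (Fin n) F} (h : Good β p) :
    ∀ b : ℕ, Good (b • β) (p ^ b) := by
  intro b
  induction b with
  | zero => simpa using Good.one
  | succ b ih =>
    rw [pow_succ, succ_nsmul]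
    exact ih.mul h

lemma Good.prod {ι : Type*} (s : Finset ι) (β : ι → (Fin n →₀ ℕ))
    (p : ι → MvPolynomial (Fin n) F) (h : ∀ j ∈ s, Good (β j) (p j)) :
    Good (∑ j ∈ s, β j) (∏ j ∈ s, p j) := by
  induction s using Finset.cons_induction with
  | empty => simpa using Good.one
  | cons a s ha ih =>
    rw [Finset.prod_cons, Finset.sum_cons]
    exact (h a (Finset.mem_cons_self a s)).mul (ih fun j hj => h j (Finset.mem_cons_of_mem hj))

lemma sum_smul_deg (hD : 1 ≤ D) (α : Fin n →₀ ℕ) :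
    ((D • α).sum fun _ e => e) = D * α.sum fun _ e => e := by
  rw [Finsupp.sum, Finsupp.sum, Finsupp.support_smul_eq (by omega : D ≠ 0), Finset.mul_sum]
  exact Finset.sum_congr rfl fun i _ => by simp

lemma good_f (hD : 1 ≤ D) (g : Fin n → MvPolynomial (Fin n) F)
    (hg : ∀ i, (g i).totalDegree ≤ D - 1) (α : Fin n →₀ ℕ) :
    Good (D • α) (α.prod fun i e => (X i ^ D - g i) ^ e) := by
  have hfi : ∀ i, Good (Finsupp.single i D) (X (R := F) i ^ D - g i) := by
    intro i
    refine ⟨-g i, by rw [X_pow_eq_monomial, sub_eq_add_neg], ?_⟩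
    by_cases hgi : g i = 0
    · left; simp [hgi]
    · right
      rw [totalDegree_neg, Finsupp.sum_single_index rfl]
      have := hg i
      omega
  have hsum : ∑ i ∈ α.support, α i • Finsupp.single i D = D • α := by
    conv_rhs => rw [← α.sum_single, Finsupp.smul_sum]
    rw [Finsupp.sum]
    exact Finset.sum_congr rfl fun i _ => by
      rw [Finsupp.smul_single, Finsupp.smul_single, smul_eq_mul, smul_eq_mul, mul_comm]
  rw [Finsupp.prod, ← hsum]
  exact Good.prod _ _ _ fun i _ => (hfi i).pow (α i)

lemma apply_le_deg (α : Fin n →₀ ℕ) (i : Fin n) : α i ≤ α.sum fun _ e => e := by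
  by_cases h : α i = 0
  · omega
  · rw [Finsupp.sum]
    exact Finset.single_le_sum (fun _ _ => Nat.zero_le _) (Finsupp.mem_support_iff.mpr h)

lemma aeval_ne_zero (hD : 1 ≤ D) (g : Fin n → MvPolynomial (Fin n) F)
    (hg : ∀ i, (g i).totalDegree ≤ D - 1) {P : MvPolynomial (Fin n) F} (hP : P ≠ 0) :
    aeval (fun i => X i ^ D - g i) P ≠ 0 := by
  set f : Fin n → MvPolynomial (Fin n) F := fun i => X i ^ D - g i with hf
  obtain ⟨α₀, hα₀mem, hα₀⟩ :=
    Finset.exists_mem_eq_sup P.support (MvPolynomial.support_nonempty.mpr hP)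
      (fun s : Fin n →₀ ℕ => s.sum fun _ e => e)
  have hd : P.totalDegree = α₀.sum fun _ e => e := hα₀
  intro h0
  have hterm : ∀ α ∈ P.support,
      coeff (D • α₀) (aeval f (monomial α (coeff α P))) =
        if α = α₀ then coeff α₀ P else 0 := by
    intro α hα
    obtain ⟨q, hq, hqd⟩ := good_f hD g hg α
    rw [aeval_monomial, ← hf] at *
    rw [hq, mul_add, algebraMap_eq, C_mul_monomial, mul_one, coeff_add, coeff_monomial]
    have hsmall : coeff (D • α₀) (C (coeff α P) * q) = 0 := by
      rcases hqd with rfl | hlt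
      · simp
      · apply coeff_eq_zero_of_totalDegree_lt
        have h1 : (C (coeff α P) * q).totalDegree ≤ q.totalDegree :=
          (totalDegree_mul _ _).trans_eq (by rw [totalDegree_C, zero_add])
        have h2 : (α.sum fun _ e => e) ≤ α₀.sum fun _ e => e := hd ▸ le_totalDegree hα
        have h3 : D * (α.sum fun _ e => e) ≤ D * α₀.sum fun _ e => e :=
          Nat.mul_le_mul_left D h2
        rw [sum_smul_deg hD α] at hlt
        have h4 := sum_smul_deg hD α₀
        rw [Finsupp.sum] at h4
        rw [h4]
        omega
    rw [hsmall, add_zero]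
    by_cases hcase : α = α₀
    · subst hcase; simp
    · have hne : ¬(D • α = D • α₀) := by
        intro h
        apply hcase
        ext i
        have h' := DFunLike.congr_fun h i
        simp only [Finsupp.smul_apply, smul_eq_mul] at h'
        exact Nat.eq_of_mul_eq_mul_left (by omega) h'
      rw [if_neg hne, if_neg hcase]
  have key : coeff (D • α₀) (aeval f P) = coeff α₀ P := by
    conv_lhs => rw [P.as_sum, map_sum]
    rw [coeff_sum, Finset.sum_congr rfl hterm, Finset.sum_ite_eq' P.support α₀
      (fun _ => coeff α₀ P), if_pos hα₀mem]
  rw [h0, coeff_zero] at key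
  exact mem_support_iff.mp hα₀mem key.symm

end Stmt0Aux

set_option maxHeartbeats 2000000 in
set_option synthInstance.maxHeartbeats 1000000 in
open Stmt0Aux in
theorem stmt_0 {F : Type*} [Field F] [IsAlgClosed F] (n D : ℕ) (hD : 1 ≤ D)
    (g : Fin n → MvPolynomial (Fin n) F)
    (hg : ∀ i, (g i).totalDegree ≤ D - 1) :
    {x : Fin n → F | ∀ i, eval x (X i ^ D - g i) = 0}.Finite ∧
      {x : Fin n → F | ∀ i, eval x (X i ^ D - g i) = 0}.Nonempty := by
  classical
  set f : Fin n → MvPolynomial (Fin n) F := fun i => X i ^ D - g i with hf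
  set I : Ideal (MvPolynomial (Fin n) F) := Ideal.span (Set.range f) with hI
  -- the variety is the zero locus of I
  have hVset : {x : Fin n → F | ∀ i, eval x (X i ^ D - g i) = 0} = zeroLocus F I := by
    ext x
    simp only [Set.mem_setOf_eq, mem_zeroLocus_iff]
    constructor
    · intro hx p hp
      have hle : I ≤ RingHom.ker (eval x) := Ideal.span_le.mpr (by
        rintro _ ⟨i, rfl⟩; exact hx i)
      exact hle hp
    · intro h i
      exact h _ (Ideal.subset_span ⟨i, rfl⟩)
  -- the f i are algebraically independent
  have hind : AlgebraicIndependent F f := by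
    rw [algebraicIndependent_iff]
    intro p hp
    by_contra hne
    exact aeval_ne_zero hD g hg hne hp
  set SB : Subalgebra F (MvPolynomial (Fin n) F) := Algebra.adjoin F (Set.range f) with hSB
  have hfB : ∀ i, f i ∈ SB := fun i => Algebra.subset_adjoin ⟨i, rfl⟩
  -- the spanning monomials
  set Sset : Set (MvPolynomial (Fin n) F) :=
    (fun α : Fin n →₀ ℕ => (monomial α (1 : F))) '' {α | ∀ i, α i < D} with hSset
  have hSfin : Sset.Finite := by
    apply Set.Finite.image
    have hfin : {h : Fin n → ℕ | ∀ i, h i < D}.Finite := by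
      have : {h : Fin n → ℕ | ∀ i, h i < D} = Set.pi Set.univ fun _ => Set.Iio D := by
        ext h; simp [Set.mem_pi]
      rw [this]
      exact Set.Finite.pi fun _ => Set.finite_Iio D
    exact Set.Finite.preimage (Set.injOn_of_injective (DFunLike.coe_injective)) hfin
  -- every polynomial is in the SB-span of Sset
  have hspan : ∀ p : MvPolynomial (Fin n) F, p ∈ Submodule.span SB Sset := by
    have main : ∀ N : ℕ, ∀ p : MvPolynomial (Fin n) F, p.totalDegree ≤ N →
        p ∈ Submodule.span SB Sset := by
      intro N
      induction N using Nat.strong_induction_on with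
      | _ N ih =>
        intro p hp
        rw [p.as_sum]
        refine Submodule.sum_mem _ fun α hα => ?_
        have hc : coeff α p ≠ 0 := mem_support_iff.mp hα
        have hαd : (α.sum fun _ e => e) ≤ N := le_trans (le_totalDegree hα) hp
        by_cases hcase : ∀ i, α i < D
        · have hmem : (monomial α (1 : F)) ∈ Sset := ⟨α, hcase, rfl⟩
          have heq : monomial α (coeff α p) =
              (⟨C (coeff α p), by
                simpa [algebraMap_eq] using SB.algebraMap_mem (coeff α p)⟩ : SB) •
                monomial α 1 := by
            rw [Algebra.smul_def]
            show monomial α (coeff α p) = C (coeff α p) * monomial α 1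
            rw [C_mul_monomial, mul_one]
          rw [heq]
          exact Submodule.smul_mem _ _ (Submodule.subset_span hmem)
        · push_neg at hcase
          obtain ⟨i, hi⟩ := hcase
          set β := α - Finsupp.single i D with hβ
          have hle : Finsupp.single i D ≤ α := Finsupp.single_le_iff.mpr hi
          have hadd : Finsupp.single i D + β = α := by
            rw [hβ, add_tsub_cancel_of_le hle]
          have hβsum : (β.sum fun _ e => e) = (α.sum fun _ e => e) - D := by
            have h1 := congrArg (fun γ : Fin n →₀ ℕ => γ.sum fun _ e => e) hadd
            rw [sum_add_deg, Finsupp.sum_single_index rfl] at h1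
            omega
          have hαD : D ≤ α.sum fun _ e => e := le_trans hi (apply_le_deg α i)
          have hN1 : N - 1 < N := by omega
          have hmono : monomial α (coeff α p) =
              f i * monomial β (coeff α p) + monomial β (coeff α p) * g i := by
            have h1 : monomial α (coeff α p) =
                monomial (Finsupp.single i D) (1 : F) * monomial β (coeff α p) := by
              rw [monomial_mul, one_mul, hadd]
            rw [h1, ← X_pow_eq_monomial, hf]
            ring
          rw [hmono]
          refine Submodule.add_mem _ ?_ ?_
          · have h1 : monomial β (coeff α p) ∈ Submodule.span SB Sset := by
              apply ih (N - 1) hN1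
              rw [totalDegree_monomial β hc]
              omega
            have heq : f i * monomial β (coeff α p) =
                (⟨f i, hfB i⟩ : SB) • monomial β (coeff α p) := by
              rw [Algebra.smul_def]; rfl
            rw [heq]
            exact Submodule.smul_mem _ _ h1
          · apply ih (N - 1) hN1
            calc (monomial β (coeff α p) * g i).totalDegree
                ≤ (monomial β (coeff α p)).totalDegree + (g i).totalDegree :=
                  totalDegree_mul _ _
              _ ≤ ((α.sum fun _ e => e) - D) + (D - 1) := by
                  rw [totalDegree_monomial β hc, hβsum]
                  exact Nat.add_le_add le_rfl (hg i)
              _ ≤ N - 1 := by omega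
    exact fun p => main p.totalDegree p le_rfl
  -- 1 is not in I
  have h1I : (1 : MvPolynomial (Fin n) F) ∉ I := by
    intro h1
    have hfg : (⊤ : Submodule SB (MvPolynomial (Fin n) F)).FG := by
      rw [Submodule.fg_def]
      exact ⟨Sset, hSfin, Submodule.eq_top_iff'.mpr hspan⟩
    set J : Ideal SB := Ideal.span (Set.range fun i => (⟨f i, hfB i⟩ : SB)) with hJ
    have hlesmul : (⊤ : Submodule SB (MvPolynomial (Fin n) F)) ≤ J • ⊤ := by
      intro p _
      obtain ⟨c, hc⟩ := (Ideal.mem_span_range_iff_exists_fun).mp h1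
      have hterm : ∀ i : Fin n, (⟨f i, hfB i⟩ : SB) • (c i * p) = c i * f i * p := by
        intro i
        rw [Algebra.smul_def]
        show f i * (c i * p) = c i * f i * p
        ring
      have hp : p = ∑ i, (⟨f i, hfB i⟩ : SB) • (c i * p) := by
        simp_rw [hterm]
        rw [← Finset.sum_mul, hc, one_mul]
      rw [hp]
      exact Submodule.sum_mem _ fun i _ =>
        Submodule.smul_mem_smul (Ideal.subset_span ⟨i, rfl⟩) Submodule.mem_top
    obtain ⟨r, hr1, hr0⟩ :=
      Submodule.exists_sub_one_mem_and_smul_eq_zero_of_fg_of_le_smul J ⊤ hfg hlesmul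
    have hr : r = 0 := by
      have h2 := hr0 1 Submodule.mem_top
      rw [Algebra.smul_def, mul_one] at h2
      exact Subtype.ext h2
    rw [hr, zero_sub] at hr1
    have h1J : (1 : SB) ∈ J := by simpa using J.neg_mem hr1
    -- the algebra map SB → F sending each f i to 0
    let φ : SB →ₐ[F] F := (aeval (fun _ : Fin n => (0 : F))).comp hind.repr
    have hφf : ∀ i, φ ⟨f i, hfB i⟩ = 0 := by
      intro i
      have heq : (⟨f i, hfB i⟩ : SB) = hind.aevalEquiv (X i) := by
        apply Subtype.ext
        simp [AlgebraicIndependent.aevalEquiv_apply_coe]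
      rw [heq]
      show aeval (fun _ : Fin n => (0 : F)) (hind.aevalEquiv.symm (hind.aevalEquiv (X i))) = 0
      rw [AlgEquiv.symm_apply_apply]
      simp
    have hJker : J ≤ RingHom.ker φ := Ideal.span_le.mpr (by
      rintro _ ⟨i, rfl⟩; exact hφf i)
    have : φ 1 = 0 := hJker h1J
    simp at this
  constructor
  · -- Finiteness
    set A := MvPolynomial (Fin n) F ⧸ I with hA
    let π : MvPolynomial (Fin n) F →+* A := Ideal.Quotient.mk I
    have hπf : ∀ i, π (f i) = 0 := fun i =>
      Ideal.Quotient.eq_zero_iff_mem.mpr (Ideal.subset_span ⟨i, rfl⟩)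
    have hspanA : Submodule.span F (π '' Sset) = ⊤ := by
      rw [Submodule.eq_top_iff']
      intro a
      obtain ⟨p, rfl⟩ := Ideal.Quotient.mk_surjective a
      refine Submodule.span_induction (p := fun x _ => π x ∈ Submodule.span F (π '' Sset))
        ?_ ?_ ?_ ?_ (hspan p)
      · exact fun x hx => Submodule.subset_span (Set.mem_image_of_mem _ hx)
      · simp only [map_zero]; exact Submodule.zero_mem _
      · intro x y _ _ hx hy
        rw [map_add]; exact Submodule.add_mem _ hx hy
      · intro b x _ hx
        rw [Algebra.smul_def]
        show π ((b : MvPolynomial (Fin n) F) * x) ∈ _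
        rw [map_mul]
        have hbB : (b : MvPolynomial (Fin n) F) ∈ SB := b.2
        have hb0 : π (b : MvPolynomial (Fin n) F) ∈ (⊥ : Subalgebra F A) := by
          have hmap : SB.map (Ideal.Quotient.mkₐ F I) ≤ ⊥ := by
            rw [hSB, AlgHom.map_adjoin]
            apply Algebra.adjoin_le
            rintro _ ⟨_, ⟨i, rfl⟩, rfl⟩
            show π (f i) ∈ (⊥ : Subalgebra F A)
            rw [hπf i]
            exact Subalgebra.zero_mem ⊥
          exact hmap ⟨_, hbB, rfl⟩
        rw [Algebra.mem_bot] at hb0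
        obtain ⟨cb, hcb⟩ := hb0
        rw [← hcb, ← Algebra.smul_def]
        exact Submodule.smul_mem _ _ hx
    have hfd : Module.Finite F A :=
      ⟨⟨(hSfin.image π).toFinset, by rw [Set.Finite.coe_toFinset]; exact hspanA⟩⟩
    have hart : IsArtinianRing A := IsArtinianRing.of_finite F A
    -- injection of the variety into the primes of A
    have hVker : ∀ x ∈ {x : Fin n → F | ∀ i, eval x (X i ^ D - g i) = 0},
        ∀ p ∈ I, eval x p = 0 := by
      intro x hx
      rw [hVset, ] at hx
      intro p hp
      exact (mem_zeroLocus_iff).mp hx p hp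
    let ψ : ∀ x : Fin n → F, (∀ p ∈ I, eval x p = 0) → (A →+* F) := fun x hx =>
      Ideal.Quotient.lift I (eval x) hx
    classical
    let Φ : (Fin n → F) → Ideal A := fun x =>
      if hx : ∀ p ∈ I, eval x p = 0 then RingHom.ker (ψ x hx) else ⊤
    apply Set.Finite.of_finite_image (f := Φ)
    · apply Set.Finite.subset (IsArtinianRing.setOfPred_isPrime_finite A)
      rintro _ ⟨x, hx, rfl⟩
      have hx' := hVker x hx
      simp only [Φ, dif_pos hx']
      exact RingHom.ker_isPrime (ψ x hx')
    · intro x hx y hy hxy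
      have hx' := hVker x hx
      have hy' := hVker y hy
      simp only [Φ, dif_pos hx', dif_pos hy'] at hxy
      funext i
      have hmem : π (X i - C (y i)) ∈ RingHom.ker (ψ y hy') := by
        show ψ y hy' (π (X i - C (y i))) = 0
        show eval y (X i - C (y i)) = 0
        simp
      rw [← hxy] at hmem
      have : eval x (X i - C (y i)) = 0 := hmem
      simpa [sub_eq_zero] using this
  · -- Nonemptiness
    by_contra hne
    rw [Set.not_nonempty_iff_eq_empty, hVset] at hne
    have hrad := vanishingIdeal_zeroLocus_eq_radical (K := F) I
    rw [hne, vanishingIdeal_empty] at hrad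
    have hItop : I = ⊤ := by rwa [eq_comm, Ideal.radical_eq_top] at hrad
    exact h1I (hItop ▸ Submodule.mem_top)
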